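/- Let L : ℝ^N → ℝ be a positive definite continuous function and let V : ℝ^N → ℝ be a continuous viscosity supersolution in ℝ^N of max_{α∈A}{ −f(x,α)·DV(x) } = L(x). Fix δ > 0 and C_δ > 0 and assume V is semiconcave with constant C_δ outside B̄_δ, i.e. V(y+h) + V(y−h) − 2V(y) ≤ C_δ|h|² whenever the segment from y−h to y+h lies in { z : |z| > δ }. If trace a(x,α) ≤ L(x)/C_δ for every α ∈ A and every x with |x| > δ, then V is a viscosity supersolution of max_{α∈A}{ −f(x,α)·DV(x) − trace(a(x,α)D²V(x)) } = 0 in the open set { x : |x| > δ }. -/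

import Mathlib

open MeasureTheory Filter Set
open scoped InnerProductSpace ENNReal NNReal Topology

noncomputable section

/-- Euclidean space `ℝ^N`. -/
abbrev EN (N : ℕ) := EuclideanSpace ℝ (Fin N)

/-- Second symmetric difference bound gives a bound on the second derivative quadratic form. -/
private lemma key {N : ℕ} (φ : EN N → ℝ) (hφ : ContDiff ℝ 2 φ) (x₀ : EN N) (C r : ℝ) (hr : 0 < r)
    (hb : ∀ h : EN N, ‖h‖ ≤ r → φ (x₀ + h) + φ (x₀ - h) - 2 * φ x₀ ≤ C * ‖h‖ ^ 2)
    (v : EN N) :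
    fderiv ℝ (fderiv ℝ φ) x₀ v v ≤ C * ‖v‖ ^ 2 := by
  set B := fderiv ℝ (fderiv ℝ φ) x₀ with hB
  rcases eq_or_ne v 0 with rfl | hv
  · simp
  have hvpos : 0 < ‖v‖ := norm_pos_iff.mpr hv
  -- the 1D functions
  set g : ℝ → ℝ := fun t => φ (x₀ + t • v) with hgdef
  set g' : ℝ → ℝ := fun t => fderiv ℝ φ (x₀ + t • v) v with hg'def
  have hφ1 : Differentiable ℝ φ := hφ.differentiable (by norm_num)
  have hline : ∀ t : ℝ, HasDerivAt (fun t : ℝ => x₀ + t • v) v t := by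
    intro t
    simpa using ((hasDerivAt_id t).smul_const v).const_add x₀
  have hg : ∀ t, HasDerivAt g (g' t) t := by
    intro t
    exact (hφ1 (x₀ + t • v)).hasFDerivAt.comp_hasDerivAt t (hline t)
  have hfd : ContDiff ℝ 1 (fderiv ℝ φ) := hφ.fderiv_right (by norm_num)
  have hBd : HasFDerivAt (fderiv ℝ φ) B x₀ :=
    (hfd.differentiable (by norm_num) x₀).hasFDerivAt
  have hg' : HasDerivAt g' (B v v) 0 := by
    have h1 : HasDerivAt (fun t : ℝ => fderiv ℝ φ (x₀ + t • v)) (B v) 0 := by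
      have hBd' : HasFDerivAt (fderiv ℝ φ) B (x₀ + (0:ℝ) • v) := by simpa using hBd
      exact hBd'.comp_hasDerivAt 0 (hline 0)
    have := (ContinuousLinearMap.apply ℝ ℝ v).hasFDerivAt.comp_hasDerivAt 0 h1
    exact this
  -- slope limits
  have hslope : Tendsto (fun t => (g' t - g' 0) / t) (𝓝[≠] (0:ℝ)) (𝓝 (B v v)) := by
    have := hasDerivAt_iff_tendsto_slope.mp hg'
    have h2 : (fun t : ℝ => (g' t - g' 0) / t) =ᶠ[𝓝[≠] (0:ℝ)] slope g' 0 := by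
      filter_upwards with t
      simp [slope_def_field, div_eq_inv_mul]
    exact (this.congr' h2.symm)
  have hneg : Tendsto (fun t : ℝ => -t) (𝓝[>] (0:ℝ)) (𝓝[≠] (0:ℝ)) := by
    rw [tendsto_nhdsWithin_iff]
    constructor
    · have : Tendsto (fun t : ℝ => -t) (𝓝 (0:ℝ)) (𝓝 (-0 : ℝ)) := continuous_neg.tendsto 0
      simpa using this.mono_left nhdsWithin_le_nhds
    · filter_upwards [self_mem_nhdsWithin] with t (ht : 0 < t)
      simp only [mem_compl_iff, mem_singleton_iff]
      intro hcon
      have : t = 0 := by linarith [neg_eq_zero.mp hcon]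
      exact absurd this (ne_of_gt ht)
  have hslp : Tendsto (fun t => (g' t - g' 0) / t) (𝓝[>] (0:ℝ)) (𝓝 (B v v)) :=
    hslope.mono_left (nhdsWithin_mono 0 (fun t ht => ne_of_gt ht))
  have hslm : Tendsto (fun t => (g' (-t) - g' 0) / (-t)) (𝓝[>] (0:ℝ)) (𝓝 (B v v)) :=
    hslope.comp hneg
  have hdiv : Tendsto (fun t => (g' t - g' (-t)) / (2 * t)) (𝓝[>] (0:ℝ)) (𝓝 (B v v)) := by
    have := (hslp.add hslm).div_const 2
    have heq : (fun t : ℝ => ((g' t - g' 0) / t + (g' (-t) - g' 0) / (-t)) / 2)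
        =ᶠ[𝓝[>] (0:ℝ)] fun t => (g' t - g' (-t)) / (2 * t) := by
      filter_upwards [self_mem_nhdsWithin] with t (ht : 0 < t)
      have ht0 : t ≠ 0 := ne_of_gt ht
      rw [div_neg, ← sub_eq_add_neg, div_sub_div_same]
      have h3 : g' t - g' 0 - (g' (-t) - g' 0) = g' t - g' (-t) := by ring
      rw [h3, div_div, mul_comm]
    have hlim : (B v v + B v v) / 2 = B v v := by ring
    rw [hlim] at this
    exact this.congr' heq
  -- L'Hôpital
  have hh : ∀ t : ℝ, HasDerivAt (fun t => g t + g (-t) - 2 * g 0) (g' t - g' (-t)) t := by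
    intro t
    have h1 : HasDerivAt (fun t : ℝ => g (-t)) (g' (-t) * (-1)) t :=
      (hg (-t)).comp t (hasDerivAt_neg t)
    have := ((hg t).add h1).sub_const (2 * g 0)
    exact this.congr_deriv (by ring)
  have hden : ∀ t : ℝ, HasDerivAt (fun t : ℝ => t ^ 2) (2 * t) t := by
    intro t
    simpa using hasDerivAt_pow 2 t
  have hgc : Continuous g := by
    rw [continuous_iff_continuousAt]; exact fun t => (hg t).continuousAt
  have hfa : Tendsto (fun t => g t + g (-t) - 2 * g 0) (𝓝[>] (0:ℝ)) (𝓝 0) := by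
    have : Continuous fun t : ℝ => g t + g (-t) - 2 * g 0 :=
      (hgc.add (hgc.comp continuous_neg)).sub continuous_const
    have h0 : g 0 + g (-0) - 2 * g 0 = 0 := by rw [neg_zero]; ring
    have h1 := (this.tendsto 0).mono_left (nhdsWithin_le_nhds (s := Ioi (0:ℝ)))
    rw [h0] at h1
    exact h1
  have hga : Tendsto (fun t : ℝ => t ^ 2) (𝓝[>] (0:ℝ)) (𝓝 0) := by
    have : Continuous fun t : ℝ => t ^ 2 := continuous_pow 2
    simpa using (this.tendsto 0).mono_left (nhdsWithin_le_nhds)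
  have hmain : Tendsto (fun t => (g t + g (-t) - 2 * g 0) / t ^ 2) (𝓝[>] (0:ℝ)) (𝓝 (B v v)) := by
    apply HasDerivAt.lhopital_zero_nhdsGT
      (Filter.Eventually.of_forall hh) (Filter.Eventually.of_forall hden) _ hfa hga hdiv
    filter_upwards [self_mem_nhdsWithin] with t (ht : 0 < t)
    positivity
  have hev : ∀ᶠ t in 𝓝[>] (0:ℝ), (g t + g (-t) - 2 * g 0) / t ^ 2 ≤ C * ‖v‖ ^ 2 := by
    have hrv : 0 < r / ‖v‖ := div_pos hr hvpos
    filter_upwards [Ioo_mem_nhdsGT_of_mem ⟨le_rfl, hrv⟩] with t ht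
    obtain ⟨ht0, htr⟩ := ht
    have hnorm : ‖t • v‖ ≤ r := by
      rw [norm_smul, Real.norm_eq_abs, abs_of_pos ht0]
      calc t * ‖v‖ ≤ (r / ‖v‖) * ‖v‖ := by nlinarith
        _ = r := by field_simp
    have := hb (t • v) hnorm
    have hgt : g t = φ (x₀ + t • v) := rfl
    have hgmt : g (-t) = φ (x₀ - t • v) := by
      simp only [hgdef, neg_smul, sub_eq_add_neg]
    have hg0 : g 0 = φ x₀ := by simp [hgdef]
    rw [div_le_iff₀ (by positivity)]
    rw [hgt, hgmt, hg0]
    have hnsq : ‖t • v‖ ^ 2 = ‖v‖ ^ 2 * t ^ 2 := by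
      rw [norm_smul, Real.norm_eq_abs, abs_of_pos ht0]; ring
    rw [hnsq] at this
    calc φ (x₀ + t • v) + φ (x₀ - t • v) - 2 * φ x₀ ≤ C * (‖v‖ ^ 2 * t ^ 2) := this
      _ = C * ‖v‖ ^ 2 * t ^ 2 := by ring
  exact le_of_tendsto hmain hev

private lemma bilin {N : ℕ} (B : EN N →L[ℝ] EN N →L[ℝ] ℝ) (w : EN N) :
    B w w = ∑ j, ∑ i, w j * w i *
      B (EuclideanSpace.single j 1) (EuclideanSpace.single i 1) := by
  have hw : ∑ i, w i • (EuclideanSpace.single i (1:ℝ) : EN N) = w := by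
    have := (EuclideanSpace.basisFun (Fin N) ℝ).sum_repr w
    simpa [EuclideanSpace.basisFun_apply, EuclideanSpace.basisFun_repr] using this
  conv_lhs => rw [← hw]
  simp only [map_sum, _root_.map_smul, ContinuousLinearMap.sum_apply,
    ContinuousLinearMap.smul_apply, smul_eq_mul, Finset.mul_sum, Finset.sum_mul]
  rw [Finset.sum_comm]
  apply Finset.sum_congr rfl
  intro j _
  apply Finset.sum_congr rfl
  intro i _
  ring

/-- Frobenius norm of an `N × M` real matrix. -/
def mnorm {N M : ℕ} (σ : Matrix (Fin N) (Fin M) ℝ) : ℝ :=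
  Real.sqrt (∑ i, ∑ j, (σ i j) ^ 2)

/-- Entry `(i,j)` of the Hessian `D²φ(x)`. -/
def hessEntry {N : ℕ} (φ : EN N → ℝ) (x : EN N) (i j : Fin N) : ℝ :=
  iteratedFDeriv ℝ 2 φ x ![EuclideanSpace.single i 1, EuclideanSpace.single j 1]

/-- `trace (a · D²φ(x))` for a square matrix `a`. -/
def traceTerm {N : ℕ} (a : Matrix (Fin N) (Fin N) ℝ) (φ : EN N → ℝ) (x : EN N) : ℝ :=
  ∑ i, ∑ j, a i j * hessEntry φ x j i

/-- The generator `L^α φ(x) = f(x,α)·Dφ(x) + trace(a(x,α) D²φ(x))`. -/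
def gen {N M : ℕ} (f : EN N → EN M → EN N)
    (a : EN N → EN M → Matrix (Fin N) (Fin N) ℝ)
    (φ : EN N → ℝ) (x : EN N) (α : EN M) : ℝ :=
  ⟪f x α, gradient φ x⟫_ℝ + traceTerm (a x α) φ x

/-- Lipschitz-in-`x` condition on the coefficients, uniformly over `α ∈ A`. -/
def LipCoeff {N M : ℕ} (A : Set (EN M)) (f : EN N → EN M → EN N)
    (σ : EN N → EN M → Matrix (Fin N) (Fin M) ℝ) : Prop :=
  ∃ C : ℝ, ∀ α ∈ A, ∀ x y : EN N,
    ‖f x α - f y α‖ + mnorm (σ x α - σ y α) ≤ C * ‖x - y‖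

/-- Convexity of the set `{(a(x,α), f(x,α)) : α ∈ A}` for every `x`. -/
def ConvexCoeff {N M : ℕ} (A : Set (EN M)) (f : EN N → EN M → EN N)
    (a : EN N → EN M → Matrix (Fin N) (Fin N) ℝ) : Prop :=
  ∀ x : EN N, Convex ℝ {p : Matrix (Fin N) (Fin N) ℝ × EN N | ∃ α ∈ A, p = (a x α, f x α)}

/-- Viscosity supersolution of `max_{α∈A} { -f(x,α)·DV(x) - tr(a(x,α) D²V(x)) } = g(x)` on `O`:
at every local minimum point `x₀ ∈ O` of `V - φ` (relative to `O`), with `φ` of class `C²`,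
one has `max_{α∈A} { -f(x₀,α)·Dφ(x₀) - tr(a(x₀,α) D²φ(x₀)) } ≥ g(x₀)` (the maximum over the
compact set `A` being attained, this is expressed by an existential quantifier). -/
def IsSupersolution {N M : ℕ} (A : Set (EN M)) (f : EN N → EN M → EN N)
    (a : EN N → EN M → Matrix (Fin N) (Fin N) ℝ)
    (O : Set (EN N)) (g : EN N → ℝ) (V : EN N → ℝ) : Prop :=
  ∀ φ : EN N → ℝ, ContDiff ℝ 2 φ → ∀ x₀ ∈ O,
    IsLocalMinOn (fun y => V y - φ y) O x₀ →
    ∃ α ∈ A, g x₀ ≤ -gen f a φ x₀ α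

/-- Viscosity subsolution of `max_{α∈A} { -f(x,α)·DU(x) - tr(a(x,α) D²U(x)) } = g(x)` on `O`. -/
def IsSubsolution {N M : ℕ} (A : Set (EN M)) (f : EN N → EN M → EN N)
    (a : EN N → EN M → Matrix (Fin N) (Fin N) ℝ)
    (O : Set (EN N)) (g : EN N → ℝ) (U : EN N → ℝ) : Prop :=
  ∀ φ : EN N → ℝ, ContDiff ℝ 2 φ → ∀ x₀ ∈ O,
    IsLocalMaxOn (fun y => U y - φ y) O x₀ →
    ∀ α ∈ A, -gen f a φ x₀ α ≤ g x₀

/-- An admissible (weak) control for the initial point `x`: a filtered probability space,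
a continuous progressively measurable process `X` with `X 0 = x` a.s., and a progressively
measurable `A`-valued control process `α`, such that for every bounded `C²` test function `φ`
the process `φ(X_t) - ∫₀ᵗ [f(X_s,α_s)·Dφ(X_s) + tr(a(X_s,α_s) D²φ(X_s))] ds` is a
`P`-martingale (integrable, adapted by progressive measurability of `X` and `α`, and
satisfying the conditional-expectation identity for all `0 ≤ s ≤ t`). -/
structure Control (N M : ℕ) (A : Set (EN M)) (f : EN N → EN M → EN N)
    (a : EN N → EN M → Matrix (Fin N) (Fin N) ℝ) (x : EN N) where
  (Ω : Type)
  [mΩ : MeasurableSpace Ω]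
  (P : Measure Ω)
  [isProb : IsProbabilityMeasure P]
  (F : Filtration ℝ mΩ)
  (X : ℝ → Ω → EN N)
  (α : ℝ → Ω → EN M)
  (X_cont : ∀ ω, Continuous fun t => X t ω)
  (X_prog : ProgMeasurable F X)
  (α_prog : ProgMeasurable F α)
  (α_mem : ∀ t ω, α t ω ∈ A)
  (init : ∀ᵐ ω ∂P, X 0 ω = x)
  (mart_int : ∀ φ : EN N → ℝ, ContDiff ℝ 2 φ → (∃ K, ∀ y, |φ y| ≤ K) →
    ∀ t : ℝ, 0 ≤ t → Integrable
      (fun ω => φ (X t ω) - ∫ s in Ioc (0:ℝ) t, gen f a φ (X s ω) (α s ω)) P)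
  (mart : ∀ φ : EN N → ℝ, ContDiff ℝ 2 φ → (∃ K, ∀ y, |φ y| ≤ K) →
    ∀ s t : ℝ, 0 ≤ s → s ≤ t →
      P[fun ω => φ (X t ω) - ∫ u in Ioc (0:ℝ) t, gen f a φ (X u ω) (α u ω) | F s]
        =ᵐ[P] fun ω => φ (X s ω) - ∫ u in Ioc (0:ℝ) s, gen f a φ (X u ω) (α u ω))

/-- Expected payoff `E_x[ V(X_t) + ∫₀ᵗ l(X_s) ds ]` for a control `c` at time `t ≥ 0`. -/
def payoff {N M : ℕ} {A : Set (EN M)} {f : EN N → EN M → EN N}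
    {a : EN N → EN M → Matrix (Fin N) (Fin N) ℝ} {x : EN N}
    (c : Control N M A f a x) (V l : EN N → ℝ) (t : ℝ) : ℝ :=
  ∫ ω, (V (c.X t ω) + ∫ s in Ioc (0:ℝ) t, l (c.X s ω)) ∂c.P

/-- Example 7.1: a semiconcave Lyapunov function for the deterministic
system remains a (viscosity) Lyapunov function for the stochastic perturbation under the
small intensity condition `tr a(x,α) ≤ L(x)/C_δ` for `|x| > δ`. -/
theorem stmt18 {N M : ℕ} (hN : 1 ≤ N) (hM : 1 ≤ M)
    (A : Set (EN M)) (hA : IsCompact A)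
    (f : EN N → EN M → EN N) (σ : EN N → EN M → Matrix (Fin N) (Fin M) ℝ)
    (hf : ContinuousOn (fun p : EN N × EN M => f p.1 p.2) (univ ×ˢ A))
    (hσ : ContinuousOn (fun p : EN N × EN M => σ p.1 p.2) (univ ×ˢ A))
    (hlip : LipCoeff A f σ)
    (a : EN N → EN M → Matrix (Fin N) (Fin N) ℝ)
    (ha : ∀ y β, a y β = (2⁻¹ : ℝ) • (σ y β * (σ y β).transpose))
    (hconv : ConvexCoeff A f a)
    (L : EN N → ℝ) (hLc : Continuous L) (hL00 : L 0 = 0) (hLpos : ∀ x : EN N, x ≠ 0 → 0 < L x)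
    (V : EN N → ℝ) (hVc : Continuous V)
    (hVsuper1 : ∀ φ : EN N → ℝ, ContDiff ℝ 2 φ → ∀ x₀ : EN N,
      IsLocalMinOn (fun y => V y - φ y) univ x₀ →
      ∃ α ∈ A, L x₀ ≤ -⟪f x₀ α, gradient φ x₀⟫_ℝ)
    (δ Cδ : ℝ) (hδ : 0 < δ) (hCδ : 0 < Cδ)
    (hsc : ∀ y h : EN N, segment ℝ (y - h) (y + h) ⊆ {z : EN N | δ < ‖z‖} →
      V (y + h) + V (y - h) - 2 * V y ≤ Cδ * ‖h‖ ^ 2)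
    (htrace : ∀ α ∈ A, ∀ x : EN N, δ < ‖x‖ → Matrix.trace (a x α) ≤ L x / Cδ) :
    IsSupersolution A f a {x : EN N | δ < ‖x‖} (fun _ => (0:ℝ)) V := by
  intro φ hφ x₀ hx₀ hmin
  have hO : IsOpen {x : EN N | δ < ‖x‖} := isOpen_lt continuous_const continuous_norm
  have hnx : 𝓝[{x : EN N | δ < ‖x‖}] x₀ = 𝓝 x₀ := nhdsWithin_eq_nhds.mpr (hO.mem_nhds hx₀)
  have hmin' : IsLocalMinOn (fun y => V y - φ y) univ x₀ := by
    rw [IsLocalMinOn, IsMinFilter, nhdsWithin_univ]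
    rw [IsLocalMinOn, IsMinFilter, hnx] at hmin
    exact hmin
  obtain ⟨α, hαA, hα⟩ := hVsuper1 φ hφ x₀ hmin'
  refine ⟨α, hαA, ?_⟩
  -- find a radius of validity
  have hev : ∀ᶠ y in 𝓝 x₀, (δ < ‖y‖ ∧ V x₀ - φ x₀ ≤ V y - φ y) := by
    have h1 : ∀ᶠ y in 𝓝 x₀, δ < ‖y‖ := hO.eventually_mem hx₀
    have h2 : ∀ᶠ y in 𝓝 x₀, V x₀ - φ x₀ ≤ V y - φ y := by
      rw [IsLocalMinOn, IsMinFilter, hnx] at hmin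
      exact hmin
    exact h1.and h2
  obtain ⟨ε, hε, hball⟩ := Metric.eventually_nhds_iff.mp hev
  set r := ε / 2 with hrdef
  have hr : 0 < r := by positivity
  -- the second symmetric difference bound for the test function
  have hbd : ∀ h : EN N, ‖h‖ ≤ r → φ (x₀ + h) + φ (x₀ - h) - 2 * φ x₀ ≤ Cδ * ‖h‖ ^ 2 := by
    intro h hh
    have hseg : segment ℝ (x₀ - h) (x₀ + h) ⊆ {z : EN N | δ < ‖z‖} := by
      intro z hz
      rw [segment_eq_image] at hz
      obtain ⟨θ, hθ, rfl⟩ := hz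
      have heq : (1 - θ) • (x₀ - h) + θ • (x₀ + h) - x₀ = (2*θ - 1) • h := by
        module
      have hzx : dist ((1 - θ) • (x₀ - h) + θ • (x₀ + h)) x₀ < ε := by
        rw [dist_eq_norm, heq, norm_smul, Real.norm_eq_abs]
        have habs : |2*θ-1| ≤ 1 := by
          rw [abs_le]; constructor <;> [linarith [hθ.1]; linarith [hθ.2]]
        calc |2*θ-1| * ‖h‖ ≤ 1 * ‖h‖ := by nlinarith [norm_nonneg h]
          _ = ‖h‖ := one_mul _
          _ ≤ r := hh
          _ < ε := by rw [hrdef]; linarith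
      exact (hball hzx).1
    have hd1 : dist (x₀ + h) x₀ < ε := by
      rw [dist_eq_norm, add_sub_cancel_left]
      calc ‖h‖ ≤ r := hh
        _ < ε := by rw [hrdef]; linarith
    have hd2 : dist (x₀ - h) x₀ < ε := by
      rw [dist_eq_norm, sub_sub_cancel_left, norm_neg]
      calc ‖h‖ ≤ r := hh
        _ < ε := by rw [hrdef]; linarith
    have h1 := (hball hd1).2
    have h2 := (hball hd2).2
    have h3 := hsc x₀ h hseg
    linarith
  have hkey := key φ hφ x₀ Cδ r hr hbd
  set B := fderiv ℝ (fderiv ℝ φ) x₀ with hBdef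
  have hHe : ∀ i j, hessEntry φ x₀ i j
      = B (EuclideanSpace.single i 1) (EuclideanSpace.single j 1) := by
    intro i j
    rw [hessEntry, iteratedFDeriv_two_apply]
    simp [hBdef]
  set σ0 : Matrix (Fin N) (Fin M) ℝ := σ x₀ α with hσ0
  have haentry : ∀ i j, a x₀ α i j = 2⁻¹ * ∑ k, σ0 i k * σ0 j k := by
    intro i j
    rw [ha]
    simp [Matrix.mul_apply, Matrix.smul_apply, Matrix.transpose_apply, smul_eq_mul, hσ0]
  set v : Fin M → EN N := fun k => (WithLp.equiv 2 (Fin N → ℝ)).symm (fun i => σ0 i k) with hv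
  have hvcoord : ∀ k i, v k i = σ0 i k := fun k i => rfl
  have hQ : ∀ k, B (v k) (v k) = ∑ j, ∑ i, σ0 j k * σ0 i k * hessEntry φ x₀ j i := by
    intro k
    rw [bilin]
    apply Finset.sum_congr rfl
    intro j _
    apply Finset.sum_congr rfl
    intro i _
    rw [hvcoord, hvcoord, hHe]
  -- rewrite the trace term
  have hTT : traceTerm (a x₀ α) φ x₀ = 2⁻¹ * ∑ k, B (v k) (v k) := by
    rw [traceTerm]
    have lhs_eq : ∀ i j : Fin N, a x₀ α i j * hessEntry φ x₀ j i
        = ∑ k, 2⁻¹ * (σ0 i k * σ0 j k * hessEntry φ x₀ j i) := by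
      intro i j
      rw [haentry, mul_assoc, Finset.sum_mul, Finset.mul_sum]
    simp only [lhs_eq]
    calc ∑ i, ∑ j, ∑ k, 2⁻¹ * (σ0 i k * σ0 j k * hessEntry φ x₀ j i)
        = ∑ i, ∑ k, ∑ j, 2⁻¹ * (σ0 i k * σ0 j k * hessEntry φ x₀ j i) :=
          Finset.sum_congr rfl fun i _ => Finset.sum_comm
      _ = ∑ k, ∑ i, ∑ j, 2⁻¹ * (σ0 i k * σ0 j k * hessEntry φ x₀ j i) := Finset.sum_comm
      _ = ∑ k, 2⁻¹ * B (v k) (v k) := by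
          apply Finset.sum_congr rfl
          intro k _
          conv_lhs => rw [Finset.sum_comm]
          rw [hQ, Finset.mul_sum]
          apply Finset.sum_congr rfl
          intro j _
          rw [Finset.mul_sum]
          apply Finset.sum_congr rfl
          intro i _
          ring
      _ = 2⁻¹ * ∑ k, B (v k) (v k) := by rw [Finset.mul_sum]
  have hnormv : ∀ k, ‖v k‖ ^ 2 = ∑ i, σ0 i k ^ 2 := by
    intro k
    rw [EuclideanSpace.norm_eq, Real.sq_sqrt (by positivity)]
    apply Finset.sum_congr rfl
    intro i _
    rw [hvcoord]
    rw [Real.norm_eq_abs, sq_abs]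
  have htrace_eq : 2⁻¹ * ∑ k, ‖v k‖ ^ 2 = Matrix.trace (a x₀ α) := by
    rw [Matrix.trace]
    simp only [Matrix.diag_apply, haentry, hnormv]
    simp only [Finset.mul_sum]
    rw [Finset.sum_comm]
    apply Finset.sum_congr rfl
    intro i _
    apply Finset.sum_congr rfl
    intro k _
    ring
  have hTTle : traceTerm (a x₀ α) φ x₀ ≤ L x₀ := by
    have hsum : ∑ k, B (v k) (v k) ≤ ∑ k, Cδ * ‖v k‖ ^ 2 :=
      Finset.sum_le_sum fun k _ => hkey (v k)
    have h5 : traceTerm (a x₀ α) φ x₀ ≤ 2⁻¹ * ∑ k, Cδ * ‖v k‖ ^ 2 := by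
      rw [hTT]
      have : (0:ℝ) ≤ 2⁻¹ := by norm_num
      nlinarith [hsum]
    have h6 : 2⁻¹ * ∑ k, Cδ * ‖v k‖ ^ 2 = Cδ * (2⁻¹ * ∑ k, ‖v k‖ ^ 2) := by
      rw [← Finset.mul_sum]
      ring
    have h7 := htrace α hαA x₀ hx₀
    have h8 : Cδ * Matrix.trace (a x₀ α) ≤ Cδ * (L x₀ / Cδ) :=
      mul_le_mul_of_nonneg_left h7 (le_of_lt hCδ)
    have h9 : Cδ * (L x₀ / Cδ) = L x₀ := by field_simp
    rw [h6, htrace_eq] at h5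
    linarith
  show (0:ℝ) ≤ -gen f a φ x₀ α
  rw [gen]
  linarith
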